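/- Let (X,d) be a finite metric space of p-negative type with p-distance matrix D_p. If D_p is invertible and ⟨D_p^{-1} 1, 1⟩ ≠ 0, then D_p is of strict negative type: ⟨D_p α, α⟩ < 0 for all nonzero α with ⟨α,1⟩ = 0. -/

import Mathlib

open Matrix

/-- If the `p`-distance matrix of a finite metric space of `p`-negative type is
invertible with `⟨D⁻¹ 1, 1⟩ ≠ 0`, then it is of strict negative type. -/
theorem inv_ones_strict_neg_type {n : ℕ} {X : Type*} [MetricSpace X]
    (x : Fin n ≃ X) (p : ℝ) (hp : 0 ≤ p)
    (D : Matrix (Fin n) (Fin n) ℝ)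
    (hD : ∀ i j, D i j = if i = j then 0 else dist (x i) (x j) ^ p)
    (hneg : ∀ α : Fin n → ℝ, α ⬝ᵥ 1 = 0 → D.mulVec α ⬝ᵥ α ≤ 0)
    (hunit : IsUnit D) (hip : D⁻¹.mulVec 1 ⬝ᵥ 1 ≠ 0) :
    ∀ α : Fin n → ℝ, α ≠ 0 → α ⬝ᵥ 1 = 0 → D.mulVec α ⬝ᵥ α < 0 := by
  intro α hα0 hα1
  rcases lt_or_eq_of_le (hneg α hα1) with h | h
  · exact h
  exfalso
  have hsym : ∀ i j, D i j = D j i := by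
    intro i j
    rcases eq_or_ne i j with rfl | hij
    · rfl
    · rw [hD, hD, if_neg hij, if_neg (Ne.symm hij), dist_comm]
  have hB : ∀ u v : Fin n → ℝ, D.mulVec u ⬝ᵥ v = D.mulVec v ⬝ᵥ u := by
    intro u v
    simp only [Matrix.mulVec, dotProduct, Finset.sum_mul]
    rw [Finset.sum_comm]
    refine Finset.sum_congr rfl fun i _ => Finset.sum_congr rfl fun j _ => ?_
    rw [hsym]; ring
  have hQ : D.mulVec α ⬝ᵥ α = 0 := h
  have hrad : ∀ β : Fin n → ℝ, β ⬝ᵥ 1 = 0 → D.mulVec α ⬝ᵥ β = 0 := by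
    intro β hβ
    set b := D.mulVec α ⬝ᵥ β with hb
    set q := D.mulVec β ⬝ᵥ β with hq
    have hq0 : q ≤ 0 := hneg β hβ
    have key : ∀ t : ℝ, 2*t*b + t^2*q ≤ 0 := by
      intro t
      have h1 : (α + t • β) ⬝ᵥ 1 = 0 := by
        rw [add_dotProduct, smul_dotProduct, hα1, hβ]; simp
      have h2 := hneg (α + t • β) h1
      have hexp : D.mulVec (α + t • β) ⬝ᵥ (α + t • β)
          = D.mulVec α ⬝ᵥ α + t * (D.mulVec α ⬝ᵥ β) + t * (D.mulVec β ⬝ᵥ α) + t^2 * q := by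
        simp only [Matrix.mulVec_add, Matrix.mulVec_smul, add_dotProduct,
          dotProduct_add, smul_dotProduct, dotProduct_smul,
          smul_eq_mul, hq]
        ring
      rw [hexp, hQ, hB β α] at h2
      linarith
    set t := b / (1 - q) with ht
    have hq1 : (0:ℝ) < 1 - q := by linarith
    have htb : b = t * (1 - q) := by rw [ht, div_mul_cancel₀ _ hq1.ne']
    have h1 := key t
    rw [htb] at h1
    have ht2 : t ^ 2 * (2 - q) ≤ 0 := by nlinarith [h1]
    have ht0 : t = 0 := by nlinarith [sq_nonneg t]
    rw [htb, ht0, zero_mul]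
  have hn : 0 < n := by
    rcases Nat.eq_zero_or_pos n with h0 | h0
    · subst h0; exact absurd (Subsingleton.elim α 0) hα0
    · exact h0
  set c : ℝ := (D.mulVec α ⬝ᵥ 1) / n with hc
  set β : Fin n → ℝ := D.mulVec α - c • 1 with hβdef
  have hone : (1 : Fin n → ℝ) ⬝ᵥ 1 = (n : ℝ) := by
    simp [dotProduct]
  have hβ1 : β ⬝ᵥ 1 = 0 := by
    rw [hβdef, sub_dotProduct, smul_dotProduct, hone, hc, smul_eq_mul]
    field_simp
    ring
  have hDαβ := hrad β hβ1
  have hββ : β ⬝ᵥ β = 0 := by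
    rw [hβdef, sub_dotProduct, smul_dotProduct, ← hβdef, hDαβ, smul_eq_mul,
      dotProduct_comm (1 : Fin n → ℝ) β, hβ1]
    ring
  have hβ0 : β = 0 := by
    have := dotProduct_self_eq_zero.mp hββ
    exact this
  have hDα : D.mulVec α = c • 1 := by
    have := sub_eq_zero.mp hβ0
    exact this
  have hdet : IsUnit D.det := (Matrix.isUnit_iff_isUnit_det D).mp hunit
  have hαeq : α = c • D⁻¹.mulVec 1 := by
    have h1 : D⁻¹.mulVec (D.mulVec α) = α := by
      rw [Matrix.mulVec_mulVec, Matrix.nonsing_inv_mul D hdet, Matrix.one_mulVec]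
    rw [← h1, hDα, Matrix.mulVec_smul]
  have hc0 : c = 0 := by
    rw [hαeq, smul_dotProduct, smul_eq_mul] at hα1
    rcases mul_eq_zero.mp hα1 with h | h
    · exact h
    · exact absurd h hip
  apply hα0
  rw [hαeq, hc0, zero_smul]
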